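/- Let M > 0, Λ ∈ ℝ, ℓ ≥ 2 an integer, and let I ⊆ (0, ∞) be a nondegenerate open interval on which f > 0 and μr + 6M > 0. Set Z(r) = (2MΛr³ + μr(r − 3M) − 6M²)/(r²(μr + 6M)). If χ : ℝ × I → ℝ is C² and satisfies on ℝ × I both the Zerilli equation ∂_t²χ − f∂_r(f∂_rχ) + f·V^Z·χ = 0 and the first-order equation f∂_rχ + Zχ = 0, then χ is identically zero. -/

import Mathlib

/-- The wave operator `∂_t²φ - f ∂_r(f ∂_r φ) + f V φ` acting on a function
`φ(t, r)`, in Schwarzschild-type coordinates (`∂_{r*} = f ∂_r`). -/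
noncomputable def waveOp (f V : ℝ → ℝ) (φ : ℝ → ℝ → ℝ) (t r : ℝ) : ℝ :=
  deriv (deriv (fun t' => φ t' r)) t
    - f r * deriv (fun r' => f r' * deriv (fun r'' => φ t r'') r') r
    + f r * V r * φ t r

namespace Stmt17Aux

/-- derivative of `f`. -/
lemma hasDerivAt_f (M Λ r : ℝ) (hr : r ≠ 0) :
    HasDerivAt (fun x : ℝ => 1 - 2 * M / x - Λ * x ^ 2 / 3)
      (2 * M / r ^ 2 - 2 * Λ * r / 3) r := by
  have h1 : HasDerivAt (fun x : ℝ => 2 * M / x) (2 * M * (-(r ^ 2)⁻¹)) r := by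
    simpa [div_eq_mul_inv] using (hasDerivAt_inv hr).const_mul (2 * M)
  have h2 : HasDerivAt (fun x : ℝ => Λ * x ^ 2 / 3) (Λ * (2 * r) / 3) r := by
    simpa using ((hasDerivAt_pow 2 r).const_mul Λ).div_const 3
  have := ((hasDerivAt_const r (1 : ℝ)).sub h1).sub h2
  refine this.congr_deriv (Eq.symm ?_)
  field_simp
  ring

/-- derivative of `Z`. -/
lemma hasDerivAt_Z (M Λ μ r : ℝ) (hr : r ≠ 0) (hP : μ * r + 6 * M ≠ 0) :
    HasDerivAt (fun x : ℝ =>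
        (2 * M * Λ * x ^ 3 + μ * x * (x - 3 * M) - 6 * M ^ 2)
          / (x ^ 2 * (μ * x + 6 * M)))
      (((6 * M * Λ * r ^ 2 + μ * (2 * r - 3 * M)) * (r ^ 2 * (μ * r + 6 * M))
          - (2 * M * Λ * r ^ 3 + μ * r * (r - 3 * M) - 6 * M ^ 2)
            * (3 * μ * r ^ 2 + 12 * M * r))
        / (r ^ 2 * (μ * r + 6 * M)) ^ 2) r := by
  have hden : r ^ 2 * (μ * r + 6 * M) ≠ 0 := by
    exact mul_ne_zero (pow_ne_zero 2 hr) hP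
  have hnum : HasDerivAt (fun x : ℝ => 2 * M * Λ * x ^ 3 + μ * x * (x - 3 * M) - 6 * M ^ 2)
      (6 * M * Λ * r ^ 2 + μ * (2 * r - 3 * M)) r := by
    have h1 : HasDerivAt (fun x : ℝ => 2 * M * Λ * x ^ 3) (2 * M * Λ * (3 * r ^ 2)) r := by
      simpa using (hasDerivAt_pow 3 r).const_mul (2 * M * Λ)
    have h2 : HasDerivAt (fun x : ℝ => μ * x * (x - 3 * M)) (μ * (2 * r - 3 * M)) r := by
      have : HasDerivAt (fun x : ℝ => μ * (x * (x - 3 * M)))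
          (μ * (1 * (r - 3 * M) + r * 1)) r := by
        exact ((hasDerivAt_id r).mul ((hasDerivAt_id r).sub_const (3 * M))).const_mul μ
      convert this using 2 <;> ring
    have := (h1.add h2).sub_const (6 * M ^ 2)
    refine this.congr_deriv (Eq.symm ?_)
    ring
  have hden' : HasDerivAt (fun x : ℝ => x ^ 2 * (μ * x + 6 * M))
      (3 * μ * r ^ 2 + 12 * M * r) r := by
    have h1 : HasDerivAt (fun x : ℝ => μ * x + 6 * M) μ r := by
      simpa using ((hasDerivAt_id r).const_mul μ).add_const (6 * M)
    have := (hasDerivAt_pow 2 r).mul h1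
    refine this.congr_deriv (Eq.symm ?_)
    ring
  exact hnum.div hden' hden

/-- The key algebraic identity: the coefficient `c = Z² - f Z' - f V` of the reduced
second-order ODE in `t`, multiplied by the positive denominator `3 r⁴ (μr+6M)⁶`,
is an explicit polynomial in `r`. -/
lemma c_identity (M Λ μ r : ℝ) (hr : r ≠ 0) (hP : μ * r + 6 * M ≠ 0) :
    (((2 * M * Λ * r ^ 3 + μ * r * (r - 3 * M) - 6 * M ^ 2)
          / (r ^ 2 * (μ * r + 6 * M))) ^ 2
        - (1 - 2 * M / r - Λ * r ^ 2 / 3)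
          * (((6 * M * Λ * r ^ 2 + μ * (2 * r - 3 * M)) * (r ^ 2 * (μ * r + 6 * M))
              - (2 * M * Λ * r ^ 3 + μ * r * (r - 3 * M) - 6 * M ^ 2)
                * (3 * μ * r ^ 2 + 12 * M * r))
            / (r ^ 2 * (μ * r + 6 * M)) ^ 2)
        - (1 - 2 * M / r - Λ * r ^ 2 / 3)
          * (((μ ^ 2 * (μ + 2) - 24 * M ^ 2 * Λ) * r ^ 3
              + 6 * μ ^ 2 * M * r ^ 2 + 36 * μ * M ^ 2 * r + 72 * M ^ 3)
            / (r ^ 3 * (μ * r + 6 * M) ^ 2)))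
      * (3 * r ^ 4 * (μ * r + 6 * M) ^ 6)
    = 1259712 * M ^ 8
      + (1539648 * M ^ 7 * μ - 559872 * M ^ 7) * r
      + (804816 * M ^ 6 * μ ^ 2 - 699840 * M ^ 6 * μ) * r ^ 2
      + (233280 * M ^ 5 * μ ^ 3 - 373248 * M ^ 5 * μ ^ 2) * r ^ 3
      + (40500 * M ^ 4 * μ ^ 4 - 110160 * M ^ 4 * μ ^ 3
          + 46656 * M ^ 6 * Λ * μ + 46656 * M ^ 6 * Λ) * r ^ 4
      + (4212 * M ^ 3 * μ ^ 5 - 19440 * M ^ 3 * μ ^ 4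
          + 46656 * M ^ 5 * Λ * μ ^ 2 + 46656 * M ^ 5 * Λ * μ) * r ^ 5
      + (243 * M ^ 2 * μ ^ 6 - 2052 * M ^ 2 * μ ^ 5
          + 19440 * M ^ 4 * Λ * μ ^ 3 + 19440 * M ^ 4 * Λ * μ ^ 2) * r ^ 6
      + (6 * M * μ ^ 7 - 120 * M * μ ^ 6
          + 4320 * M ^ 3 * Λ * μ ^ 4 + 4320 * M ^ 3 * Λ * μ ^ 3) * r ^ 7
      + (-3 * μ ^ 7 + 540 * M ^ 2 * Λ * μ ^ 5 + 540 * M ^ 2 * Λ * μ ^ 4) * r ^ 8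
      + (36 * M * Λ * μ ^ 6 + 36 * M * Λ * μ ^ 5) * r ^ 9
      + (Λ * μ ^ 7 + Λ * μ ^ 6) * r ^ 10 := by
  field_simp
  ring

lemma hasDerivAt_w (M Λ μ s : ℝ) (hs : s ≠ 0) (hP : μ * s + 6 * M ≠ 0)
    (hf : 0 < 1 - 2 * M / s - Λ * s ^ 2 / 3) :
    HasDerivAt (fun x : ℝ => (μ * x + 6 * M) / Real.sqrt (1 - 2 * M / x - Λ * x ^ 2 / 3))
      ((μ * s + 6 * M) / Real.sqrt (1 - 2 * M / s - Λ * s ^ 2 / 3)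
        * ((2 * M * Λ * s ^ 3 + μ * s * (s - 3 * M) - 6 * M ^ 2) / (s ^ 2 * (μ * s + 6 * M)))
        / (1 - 2 * M / s - Λ * s ^ 2 / 3)) s := by
  have hf' := hasDerivAt_f M Λ s hs
  have hsq : HasDerivAt (fun x : ℝ => Real.sqrt (1 - 2 * M / x - Λ * x ^ 2 / 3))
      ((2 * M / s ^ 2 - 2 * Λ * s / 3) / (2 * Real.sqrt (1 - 2 * M / s - Λ * s ^ 2 / 3))) s :=
    hf'.sqrt hf.ne'
  have hnum : HasDerivAt (fun x : ℝ => μ * x + 6 * M) μ s := by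
    simpa using ((hasDerivAt_id s).const_mul μ).add_const (6 * M)
  have hqpos : 0 < Real.sqrt (1 - 2 * M / s - Λ * s ^ 2 / 3) := Real.sqrt_pos.2 hf
  have h := hnum.div hsq hqpos.ne'
  refine h.congr_deriv (Eq.symm ?_)
  have hq : Real.sqrt (1 - 2 * M / s - Λ * s ^ 2 / 3) ^ 2 = 1 - 2 * M / s - Λ * s ^ 2 / 3 :=
    Real.sq_sqrt hf.le
  set q := Real.sqrt (1 - 2 * M / s - Λ * s ^ 2 / 3) with hqdef
  have hqne : q ≠ 0 := hqpos.ne'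
  rw [← hq]
  have hqq : q ^ 2 * (3 * s) = 3 * s - 6 * M - Λ * s ^ 3 := by
    rw [hq]; field_simp; ring
  field_simp
  linear_combination (-(μ*s)) * hqq

end Stmt17Aux

/-- Core of the injectivity theorem for the even-sector map `[h⁺] ↦ G₊`: a C²
solution of the Zerilli equation annihilated by the first-order operator
`f∂_r + Z` on a nondegenerate interval vanishes identically. -/
theorem stmt_17 (M Λ : ℝ) (hM : 0 < M) (ℓ : ℕ) (hℓ : 2 ≤ ℓ) (a b : ℝ)
    (hab : a < b) (hI : Set.Ioo a b ⊆ Set.Ioi (0 : ℝ)) :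
    let μ : ℝ := ((ℓ : ℝ) - 1) * ((ℓ : ℝ) + 2)
    let f : ℝ → ℝ := fun r => 1 - 2 * M / r - Λ * r ^ 2 / 3
    let Z : ℝ → ℝ := fun r =>
      (2 * M * Λ * r ^ 3 + μ * r * (r - 3 * M) - 6 * M ^ 2)
        / (r ^ 2 * (μ * r + 6 * M))
    let VZ : ℝ → ℝ := fun r =>
      ((μ ^ 2 * (ℓ : ℝ) * ((ℓ : ℝ) + 1) - 24 * M ^ 2 * Λ) * r ^ 3
          + 6 * μ ^ 2 * M * r ^ 2 + 36 * μ * M ^ 2 * r + 72 * M ^ 3)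
        / (r ^ 3 * (μ * r + 6 * M) ^ 2)
    (∀ r ∈ Set.Ioo a b, 0 < f r) →
    (∀ r ∈ Set.Ioo a b, 0 < μ * r + 6 * M) →
    ∀ χ : ℝ → ℝ → ℝ,
      ContDiffOn ℝ 2 (fun p : ℝ × ℝ => χ p.1 p.2) (Set.univ ×ˢ Set.Ioo a b) →
      (∀ t : ℝ, ∀ r ∈ Set.Ioo a b, waveOp f VZ χ t r = 0) →
      (∀ t : ℝ, ∀ r ∈ Set.Ioo a b,
        f r * deriv (fun s => χ t s) r + Z r * χ t r = 0) →
      ∀ t : ℝ, ∀ r ∈ Set.Ioo a b, χ t r = 0 := by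
  intro μ f Z VZ hfpos hμpos χ hχ hwave hfirst t₀ r₀ hr₀
  by_contra hne
  have hμdef : μ = ((ℓ : ℝ) - 1) * ((ℓ : ℝ) + 2) := rfl
  have hfdef : f = fun r : ℝ => 1 - 2 * M / r - Λ * r ^ 2 / 3 := rfl
  have hZdef : Z = fun r : ℝ =>
      (2 * M * Λ * r ^ 3 + μ * r * (r - 3 * M) - 6 * M ^ 2)
        / (r ^ 2 * (μ * r + 6 * M)) := rfl
  have hVZdef : VZ = fun r : ℝ =>
      ((μ ^ 2 * (ℓ : ℝ) * ((ℓ : ℝ) + 1) - 24 * M ^ 2 * Λ) * r ^ 3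
          + 6 * μ ^ 2 * M * r ^ 2 + 36 * μ * M ^ 2 * r + 72 * M ^ 3)
        / (r ^ 3 * (μ * r + 6 * M) ^ 2) := rfl
  clear_value μ f Z VZ
  have hrpos : ∀ {r : ℝ}, r ∈ Set.Ioo a b → (0 : ℝ) < r := fun {r} hr => hI hr
  -- differentiability of `χ t ·` on the interval
  have hop : IsOpen ((Set.univ : Set ℝ) ×ˢ Set.Ioo a b) := isOpen_univ.prod isOpen_Ioo
  have hdiffr : ∀ (t : ℝ) {r : ℝ}, r ∈ Set.Ioo a b →
      DifferentiableAt ℝ (fun s => χ t s) r := by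
    intro t r hr
    have hmem : ((t, r) : ℝ × ℝ) ∈ (Set.univ : Set ℝ) ×ˢ Set.Ioo a b := ⟨Set.mem_univ _, hr⟩
    have h1 : DifferentiableAt ℝ (fun p : ℝ × ℝ => χ p.1 p.2) (t, r) :=
      (hχ.contDiffAt (hop.mem_nhds hmem)).differentiableAt (by norm_num)
    have h2 : DifferentiableAt ℝ (fun s : ℝ => ((t, s) : ℝ × ℝ)) r :=
      (differentiableAt_const t).prodMk differentiableAt_id
    exact h1.comp r h2
  -- the integrating factor w
  set w : ℝ → ℝ := fun s => (μ * s + 6 * M) / Real.sqrt (f s) with hwdef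
  have hwpos : ∀ {r : ℝ}, r ∈ Set.Ioo a b → 0 < w r := fun {r} hr =>
    div_pos (hμpos r hr) (Real.sqrt_pos.2 (hfpos r hr))
  have hwder : ∀ {s : ℝ}, s ∈ Set.Ioo a b → HasDerivAt w (w s * Z s / f s) s := by
    intro s hs
    have hfp := hfpos s hs
    rw [hfdef] at hfp
    have h := Stmt17Aux.hasDerivAt_w M Λ μ s (hrpos hs).ne' (hμpos s hs).ne' hfp
    rw [hwdef]
    simp only [hfdef, hZdef]
    exact h
  clear_value w
  -- `χ t x * w x` is constant in x on the interval
  have huder : ∀ (t : ℝ) {s : ℝ}, s ∈ Set.Ioo a b →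
      HasDerivAt (fun x => χ t x * w x) 0 s := by
    intro t s hs
    have h1 : HasDerivAt (fun x => χ t x) (deriv (fun x => χ t x) s) s :=
      (hdiffr t hs).hasDerivAt
    have h3 := h1.mul (hwder hs)
    have h4 := hfirst t s hs
    have hfne : f s ≠ 0 := (hfpos s hs).ne'
    have hd : deriv (fun x => χ t x) s = -(Z s * χ t s) / f s := by
      rw [eq_div_iff hfne]
      linear_combination h4
    refine h3.congr_deriv (Eq.symm ?_)
    rw [hd]
    ring
  have htrans0 : ∀ (t : ℝ) {r1 r2 : ℝ}, r1 ∈ Set.Ioo a b → r2 ∈ Set.Ioo a b → r1 < r2 →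
      χ t r2 * w r2 = χ t r1 * w r1 := by
    intro t r1 r2 h1 h2 h12
    have hsub : Set.Icc r1 r2 ⊆ Set.Ioo a b := Set.Icc_subset_Ioo h1.1 h2.2
    have hcont : ContinuousOn (fun x => χ t x * w x) (Set.Icc r1 r2) := fun x hx =>
      ((huder t (hsub hx)).differentiableAt.continuousAt).continuousWithinAt
    have hd : ∀ x ∈ Set.Ioo r1 r2, HasDerivAt (fun x => χ t x * w x) ((fun _ => (0:ℝ)) x) x :=
      fun x hx => huder t (hsub ⟨hx.1.le, hx.2.le⟩)
    obtain ⟨cc, _, hceq⟩ :=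
      exists_hasDerivAt_eq_slope (fun x => χ t x * w x) (fun _ => 0) h12 hcont hd
    have hne12 : r2 - r1 ≠ 0 := sub_ne_zero.2 h12.ne'
    have h0 : χ t r2 * w r2 - χ t r1 * w r1 = 0 := by
      have := hceq.symm
      rw [div_eq_iff hne12] at this
      linarith
    linarith
  have htrans : ∀ (t : ℝ) {r1 r2 : ℝ}, r1 ∈ Set.Ioo a b → r2 ∈ Set.Ioo a b →
      χ t r2 * w r2 = χ t r1 * w r1 := by
    intro t r1 r2 h1 h2
    rcases lt_trichotomy r1 r2 with h | h | h
    · exact htrans0 t h1 h2 h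
    · rw [h]
    · exact (htrans0 t h2 h1 h).symm
  -- second-order ODE in t with coefficient c
  set Zd : ℝ → ℝ := fun r =>
      (((6 * M * Λ * r ^ 2 + μ * (2 * r - 3 * M)) * (r ^ 2 * (μ * r + 6 * M))
          - (2 * M * Λ * r ^ 3 + μ * r * (r - 3 * M) - 6 * M ^ 2)
            * (3 * μ * r ^ 2 + 12 * M * r))
        / (r ^ 2 * (μ * r + 6 * M)) ^ 2) with hZddef
  have hZder : ∀ {r : ℝ}, r ∈ Set.Ioo a b → HasDerivAt Z (Zd r) r := by
    intro r hr
    have h := Stmt17Aux.hasDerivAt_Z M Λ μ r (hrpos hr).ne' (hμpos r hr).ne'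
    rw [hZdef, hZddef]
    exact h
  clear_value Zd
  set c : ℝ → ℝ := fun s => Z s ^ 2 - f s * Zd s - f s * VZ s with hcdef
  clear_value c
  have hsec : ∀ (t : ℝ) {r : ℝ}, r ∈ Set.Ioo a b →
      deriv (deriv (fun t' => χ t' r)) t = c r * χ t r := by
    intro t r hr
    have hw := hwave t r hr
    unfold waveOp at hw
    have heq : (fun r' => f r' * deriv (fun r'' => χ t r'') r')
        =ᶠ[nhds r] (fun r' => -(Z r' * χ t r')) := by
      filter_upwards [isOpen_Ioo.mem_nhds hr] with x hx
      have := hfirst t x hx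
      linarith
    have hder2 : HasDerivAt (fun r' => -(Z r' * χ t r'))
        (-(Zd r * χ t r + Z r * deriv (fun s => χ t s) r)) r :=
      ((hZder hr).mul (hdiffr t hr).hasDerivAt).neg
    have h5 : deriv (fun r' => f r' * deriv (fun r'' => χ t r'') r') r
        = -(Zd r * χ t r + Z r * deriv (fun s => χ t s) r) := by
      rw [heq.deriv_eq]; exact hder2.deriv
    rw [h5] at hw
    have h4 := hfirst t r hr
    rw [hcdef]
    linear_combination hw + (-(Z r)) * h4
  -- χ t₀ never vanishes on the interval
  have hnz : ∀ {r : ℝ}, r ∈ Set.Ioo a b → χ t₀ r ≠ 0 := by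
    intro r hr h0
    have h := htrans t₀ hr₀ hr
    rw [h0, zero_mul] at h
    rcases mul_eq_zero.1 h.symm with h' | h'
    · exact hne h'
    · exact (hwpos hr₀).ne' h'
  -- c is constant on the interval
  have hceq : ∀ {r1 r2 : ℝ}, r1 ∈ Set.Ioo a b → r2 ∈ Set.Ioo a b → c r1 = c r2 := by
    intro r1 r2 h1 h2
    have hw2ne : w r2 ≠ 0 := (hwpos h2).ne'
    have hlin : ∀ t : ℝ, χ t r2 = (w r1 / w r2) * χ t r1 := by
      intro t
      have h := htrans t h1 h2
      rw [div_mul_eq_mul_div, eq_div_iff hw2ne]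
      linear_combination h
    have hfunext : (fun t' => χ t' r2) = (fun t' => (w r1 / w r2) * χ t' r1) := funext hlin
    have hd2 : deriv (deriv (fun t' => χ t' r2)) t₀
        = (w r1 / w r2) * deriv (deriv (fun t' => χ t' r1)) t₀ := by
      rw [hfunext, deriv_const_mul_field']
      exact deriv_const_mul_field _
    have e1 := hsec t₀ h1
    have e2 := hsec t₀ h2
    have h5 : c r2 * ((w r1 / w r2) * χ t₀ r1) = (w r1 / w r2) * (c r1 * χ t₀ r1) := by
      rw [← hlin t₀, ← e2, hd2, e1]
    have h3 : (c r2 - c r1) * ((w r1 / w r2) * χ t₀ r1) = 0 := by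
      linear_combination h5
    rcases mul_eq_zero.1 h3 with h | h
    · linarith
    · rcases mul_eq_zero.1 h with h' | h'
      · exact absurd h' (div_ne_zero (hwpos h1).ne' hw2ne)
      · exact absurd h' (hnz h1)
  -- translate into the polynomial identity
  have hll : μ ^ 2 * (ℓ : ℝ) * ((ℓ : ℝ) + 1) = μ ^ 2 * (μ + 2) := by
    rw [hμdef]; ring
  have hm : (a + b) / 2 ∈ Set.Ioo a b := ⟨by linarith, by linarith⟩
  obtain ⟨κ, hκ⟩ : ∃ κ : ℝ, ∀ x ∈ Set.Ioo a b, c x = κ :=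
    ⟨c ((a + b) / 2), fun x hx => hceq hx hm⟩
  have hNκ : ∀ x ∈ Set.Ioo a b,
      1259712 * M ^ 8
      + (1539648 * M ^ 7 * μ - 559872 * M ^ 7) * x
      + (804816 * M ^ 6 * μ ^ 2 - 699840 * M ^ 6 * μ) * x ^ 2
      + (233280 * M ^ 5 * μ ^ 3 - 373248 * M ^ 5 * μ ^ 2) * x ^ 3
      + (40500 * M ^ 4 * μ ^ 4 - 110160 * M ^ 4 * μ ^ 3
          + 46656 * M ^ 6 * Λ * μ + 46656 * M ^ 6 * Λ) * x ^ 4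
      + (4212 * M ^ 3 * μ ^ 5 - 19440 * M ^ 3 * μ ^ 4
          + 46656 * M ^ 5 * Λ * μ ^ 2 + 46656 * M ^ 5 * Λ * μ) * x ^ 5
      + (243 * M ^ 2 * μ ^ 6 - 2052 * M ^ 2 * μ ^ 5
          + 19440 * M ^ 4 * Λ * μ ^ 3 + 19440 * M ^ 4 * Λ * μ ^ 2) * x ^ 6
      + (6 * M * μ ^ 7 - 120 * M * μ ^ 6
          + 4320 * M ^ 3 * Λ * μ ^ 4 + 4320 * M ^ 3 * Λ * μ ^ 3) * x ^ 7
      + (-3 * μ ^ 7 + 540 * M ^ 2 * Λ * μ ^ 5 + 540 * M ^ 2 * Λ * μ ^ 4) * x ^ 8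
      + (36 * M * Λ * μ ^ 6 + 36 * M * Λ * μ ^ 5) * x ^ 9
      + (Λ * μ ^ 7 + Λ * μ ^ 6) * x ^ 10
      = κ * (3 * x ^ 4 * (μ * x + 6 * M) ^ 6) := by
    intro x hx
    have hxne : x ≠ 0 := (hrpos hx).ne'
    have hPne : μ * x + 6 * M ≠ 0 := (hμpos x hx).ne'
    have hid := Stmt17Aux.c_identity M Λ μ x hxne hPne
    have hcval : c x = ((2 * M * Λ * x ^ 3 + μ * x * (x - 3 * M) - 6 * M ^ 2)
          / (x ^ 2 * (μ * x + 6 * M))) ^ 2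
        - (1 - 2 * M / x - Λ * x ^ 2 / 3)
          * (((6 * M * Λ * x ^ 2 + μ * (2 * x - 3 * M)) * (x ^ 2 * (μ * x + 6 * M))
              - (2 * M * Λ * x ^ 3 + μ * x * (x - 3 * M) - 6 * M ^ 2)
                * (3 * μ * x ^ 2 + 12 * M * x))
            / (x ^ 2 * (μ * x + 6 * M)) ^ 2)
        - (1 - 2 * M / x - Λ * x ^ 2 / 3)
          * (((μ ^ 2 * (μ + 2) - 24 * M ^ 2 * Λ) * x ^ 3
              + 6 * μ ^ 2 * M * x ^ 2 + 36 * μ * M ^ 2 * x + 72 * M ^ 3)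
            / (x ^ 3 * (μ * x + 6 * M) ^ 2)) := by
      rw [hcdef]
      simp only [hZdef, hfdef, hVZdef, hZddef]
      rw [← hll]
    rw [← hid, ← hcval, hκ x hx]
  -- polynomial vanishing on an interval forces M = 0
  set p : Polynomial ℝ :=
      Polynomial.C (1259712 * M ^ 8)
      + Polynomial.C (1539648 * M ^ 7 * μ - 559872 * M ^ 7) * Polynomial.X
      + Polynomial.C (804816 * M ^ 6 * μ ^ 2 - 699840 * M ^ 6 * μ) * Polynomial.X ^ 2
      + Polynomial.C (233280 * M ^ 5 * μ ^ 3 - 373248 * M ^ 5 * μ ^ 2) * Polynomial.X ^ 3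
      + Polynomial.C (40500 * M ^ 4 * μ ^ 4 - 110160 * M ^ 4 * μ ^ 3
          + 46656 * M ^ 6 * Λ * μ + 46656 * M ^ 6 * Λ) * Polynomial.X ^ 4
      + Polynomial.C (4212 * M ^ 3 * μ ^ 5 - 19440 * M ^ 3 * μ ^ 4
          + 46656 * M ^ 5 * Λ * μ ^ 2 + 46656 * M ^ 5 * Λ * μ) * Polynomial.X ^ 5
      + Polynomial.C (243 * M ^ 2 * μ ^ 6 - 2052 * M ^ 2 * μ ^ 5
          + 19440 * M ^ 4 * Λ * μ ^ 3 + 19440 * M ^ 4 * Λ * μ ^ 2) * Polynomial.X ^ 6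
      + Polynomial.C (6 * M * μ ^ 7 - 120 * M * μ ^ 6
          + 4320 * M ^ 3 * Λ * μ ^ 4 + 4320 * M ^ 3 * Λ * μ ^ 3) * Polynomial.X ^ 7
      + Polynomial.C (-3 * μ ^ 7 + 540 * M ^ 2 * Λ * μ ^ 5 + 540 * M ^ 2 * Λ * μ ^ 4)
          * Polynomial.X ^ 8
      + Polynomial.C (36 * M * Λ * μ ^ 6 + 36 * M * Λ * μ ^ 5) * Polynomial.X ^ 9
      + Polynomial.C (Λ * μ ^ 7 + Λ * μ ^ 6) * Polynomial.X ^ 10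
      - Polynomial.C κ * (Polynomial.C 3 * Polynomial.X ^ 4
          * (Polynomial.C μ * Polynomial.X + Polynomial.C (6 * M)) ^ 6) with hpdef
  have hroots : Set.Ioo a b ⊆ {x | p.IsRoot x} := by
    intro x hx
    show Polynomial.eval x p = 0
    rw [hpdef]
    simp only [Polynomial.eval_add, Polynomial.eval_sub, Polynomial.eval_mul,
      Polynomial.eval_pow, Polynomial.eval_C, Polynomial.eval_X]
    linear_combination hNκ x hx
  have hp0 : p = 0 :=
    Polynomial.eq_zero_of_infinite_isRoot p ((Set.Ioo_infinite hab).mono hroots)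
  have heval : Polynomial.eval 0 p = 0 := by rw [hp0]; simp
  rw [hpdef] at heval
  simp only [Polynomial.eval_add, Polynomial.eval_sub, Polynomial.eval_mul,
    Polynomial.eval_pow, Polynomial.eval_C, Polynomial.eval_X] at heval
  have h8 : (0:ℝ) < M ^ 8 := pow_pos hM 8
  nlinarith [heval, h8]
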